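/- Let d ≥ 1. A function f : ℤ₊^d → ℝ is positive definite if and only if (f *_d μ_d)(i₁, …, i_d) ≥ 0 for all i₁, …, i_d ∈ ℤ₊, where μ_d(i₁, …, i_d) = μ(i₁)⋯μ(i_d) with μ the arithmetic Möbius function, and *_d is the d-variate Dirichlet convolution. -/

import Mathlib

/-- A multivariate arithmetic function `f : ℤ₊^d → ℝ` (positive integers encoded as
positive natural numbers) is *positive definite* if for every finite nonempty set `S` of
`d`-tuples of positive integers, the matrix with entries `f(gcd(x₁,y₁), …, gcd(x_d,y_d))`
for `x, y ∈ S` is positive semidefinite. -/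
def IsPosDefArith (d : ℕ) (f : (Fin d → ℕ) → ℝ) : Prop :=
  ∀ S : Finset (Fin d → ℕ), S.Nonempty → (∀ x ∈ S, ∀ i, 0 < x i) →
    (Matrix.of fun x y : S => f fun i => Nat.gcd (x.1 i) (y.1 i)).PosSemidef

/-- The arithmetic Möbius function, real valued. -/
noncomputable def muR (n : ℕ) : ℝ := ((ArithmeticFunction.moebius n : ℤ) : ℝ)

/-- The `d`-variate Dirichlet convolution:
`(f *_d g)(i₁, …, i_d) = ∑_{k₁ ∣ i₁, …, k_d ∣ i_d} f(k) g(i₁/k₁, …, i_d/k_d)`. -/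
noncomputable def dirichletConvD (d : ℕ) (f g : (Fin d → ℕ) → ℝ) : (Fin d → ℕ) → ℝ :=
  fun i => ∑ k ∈ Fintype.piFinset fun j => (i j).divisors, f k * g fun j => i j / k j

/-- The `d`-variate Möbius function `μ_d(i₁, …, i_d) = μ(i₁)⋯μ(i_d)`. -/
noncomputable def muD (d : ℕ) : (Fin d → ℕ) → ℝ := fun i => ∏ j, muR (i j)

lemma muR_sum (N : ℕ) : ∑ t ∈ N.divisors, muR t = if N = 1 then 1 else 0 := by
  have h := congrArg (fun F : ArithmeticFunction ℤ => F N)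
    ArithmeticFunction.moebius_mul_coe_zeta
  simp only [ArithmeticFunction.coe_mul_zeta_apply, ArithmeticFunction.one_apply] at h
  unfold muR
  rw [← Int.cast_sum, h]
  split <;> simp

lemma div_eq_one_iff' {n m : ℕ} (hn : 0 < n) (hm : m ∣ n) : n / m = 1 ↔ n = m := by
  constructor
  · intro h
    conv_lhs => rw [← Nat.div_mul_cancel hm, h, one_mul]
  · rintro rfl
    exact Nat.div_self hn

lemma dvd_swap {n m k : ℕ} (hm : m ∣ n) (hk : k ∣ n) :
    m ∣ n / k ↔ k ∣ n / m := by
  rw [Nat.dvd_div_iff_mul_dvd hk, Nat.dvd_div_iff_mul_dvd hm, mul_comm]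

lemma key' (n m : ℕ) (hn : 0 < n) (hm : m ∣ n) :
    ∑ k ∈ n.divisors, (if m ∣ k then muR (n / k) else 0) = if n = m then 1 else 0 := by
  have hn' : n ≠ 0 := hn.ne'
  have step : ∑ k ∈ n.divisors, (if m ∣ k then muR (n / k) else 0)
      = ∑ k ∈ n.divisors, (fun t => if t ∣ n / m then muR t else 0) (n / k) := by
    refine Finset.sum_congr rfl fun k hk => ?_
    rw [Nat.mem_divisors] at hk
    have h2 : m ∣ k ↔ (n / k) ∣ (n / m) := by
      have := dvd_swap hm (Nat.div_dvd_of_dvd hk.1)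
      rwa [Nat.div_div_self hk.1 hn'] at this
    simp only [h2]
  rw [step, Nat.sum_div_divisors n (fun t => if t ∣ n / m then muR t else 0),
    ← Finset.sum_filter, Nat.divisors_filter_dvd_of_dvd hn' (Nat.div_dvd_of_dvd hm),
    muR_sum]
  simp only [div_eq_one_iff' hn hm]

lemma key (n m : ℕ) (hn : 0 < n) (hm : m ∣ n) :
    ∑ k ∈ n.divisors, (if m ∣ k then muR (k / m) else 0) = if n = m then 1 else 0 := by
  have hn' : n ≠ 0 := hn.ne'
  rw [← Nat.sum_div_divisors n (fun k => if m ∣ k then muR (k / m) else 0)]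
  have step : ∑ k ∈ n.divisors, (if m ∣ n / k then muR (n / k / m) else 0)
      = ∑ k ∈ n.divisors, (if k ∣ n / m then muR ((n / m) / k) else 0) := by
    refine Finset.sum_congr rfl fun k hk => ?_
    rw [Nat.mem_divisors] at hk
    have h3 : n / k / m = n / m / k := by
      rw [Nat.div_div_eq_div_mul, Nat.div_div_eq_div_mul, mul_comm]
    simp only [dvd_swap hm hk.1, h3]
  rw [step, ← Finset.sum_filter, Nat.divisors_filter_dvd_of_dvd hn' (Nat.div_dvd_of_dvd hm),
    Nat.sum_div_divisors, muR_sum]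
  simp only [div_eq_one_iff' hn hm]

lemma ite_forall_prod {d : ℕ} (P : Fin d → Prop) [DecidablePred P] (h : Fin d → ℝ) :
    (if ∀ j, P j then ∏ j, h j else 0) = ∏ j, if P j then h j else 0 := by
  by_cases H : ∀ j, P j
  · rw [if_pos H]
    exact Finset.prod_congr rfl fun j _ => (if_pos (H j)).symm
  · rw [if_neg H, eq_comm]
    push_neg at H
    obtain ⟨j0, hj0⟩ := H
    exact Finset.prod_eq_zero (Finset.mem_univ j0) (if_neg hj0)

lemma sum_pi_ite {d : ℕ} (D : Fin d → Finset ℕ) (P : Fin d → ℕ → Prop)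
    [∀ j x, Decidable (P j x)] (h : Fin d → ℕ → ℝ) :
    ∑ k ∈ Fintype.piFinset D, (if ∀ j, P j (k j) then ∏ j, h j (k j) else 0)
      = ∏ j, ∑ x ∈ D j, (if P j x then h j x else 0) := by
  rw [Finset.prod_univ_sum]
  exact Finset.sum_congr rfl fun k _ => ite_forall_prod _ _

lemma inv_lemma {d : ℕ} (f : (Fin d → ℕ) → ℝ) (i : Fin d → ℕ) (hi : ∀ j, 0 < i j) :
    ∑ k ∈ Fintype.piFinset (fun j => (i j).divisors), dirichletConvD d f (muD d) k = f i := by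
  classical
  set S := Fintype.piFinset (fun j => (i j).divisors) with hSdef
  have hiS : i ∈ S := by
    simp only [hSdef, Fintype.mem_piFinset]
    exact fun j => Nat.mem_divisors_self _ (hi j).ne'
  have step1 : ∀ k ∈ S,
      dirichletConvD d f (muD d) k
        = ∑ m ∈ S, (if ∀ j, m j ∣ k j then f m * ∏ j, muR (k j / m j) else 0) := by
    intro k hk
    simp only [hSdef, Fintype.mem_piFinset, Nat.mem_divisors] at hk
    have hPi : Fintype.piFinset (fun j => (k j).divisors)
        = S.filter (fun m => ∀ j, m j ∣ k j) := by
      ext m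
      simp only [hSdef, Fintype.mem_piFinset, Nat.mem_divisors, Finset.mem_filter,
        Fintype.mem_piFinset]
      constructor
      · intro h
        exact ⟨fun j => ⟨(h j).1.trans (hk j).1, (hk j).2⟩, fun j => (h j).1⟩
      · intro h j
        exact ⟨h.2 j, fun h0 => (hk j).2 (Nat.eq_zero_of_zero_dvd (h0 ▸ (hk j).1))⟩
    rw [dirichletConvD, hPi, Finset.sum_filter]
    rfl
  rw [Finset.sum_congr rfl step1, Finset.sum_comm]
  have step2 : ∀ m ∈ S,
      ∑ k ∈ S, (if ∀ j, m j ∣ k j then f m * ∏ j, muR (k j / m j) else 0)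
        = f m * (if m = i then 1 else 0) := by
    intro m hm
    simp only [hSdef, Fintype.mem_piFinset, Nat.mem_divisors] at hm
    have pull : ∀ k : Fin d → ℕ, (if ∀ j, m j ∣ k j then f m * ∏ j, muR (k j / m j) else 0)
        = f m * (if ∀ j, m j ∣ k j then ∏ j, muR (k j / m j) else 0) := by
      intro k; split <;> simp
    rw [Finset.sum_congr rfl fun k _ => pull k, ← Finset.mul_sum, hSdef,
      sum_pi_ite (fun j => (i j).divisors) (fun j x => m j ∣ x) (fun j x => muR (x / m j))]
    congr 1
    have : ∀ j, (∑ x ∈ (i j).divisors, if m j ∣ x then muR (x / m j) else 0)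
        = if i j = m j then 1 else 0 := fun j => key (i j) (m j) (hi j) (hm j).1
    rw [Finset.prod_congr rfl fun j _ => this j, ← ite_forall_prod (fun j => i j = m j)
      (fun _ => 1)]
    simp only [Finset.prod_const_one]
    congr 1
    simp only [eq_iff_iff]
    constructor
    · intro h; funext j; exact (h j).symm
    · intro h j; exact (congrFun h j).symm
  rw [Finset.sum_congr rfl step2]
  simp only [mul_ite, mul_one, mul_zero]
  rw [Finset.sum_ite_eq' S i f]
  exact if_pos hiS

lemma gcd_expand {d : ℕ} (f : (Fin d → ℕ) → ℝ) (L : Fin d → ℕ) (hL : ∀ j, L j ≠ 0)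
    (x y : Fin d → ℕ) (hx : ∀ j, 0 < x j) (hy : ∀ j, 0 < y j)
    (hxL : ∀ j, x j ∣ L j) (hyL : ∀ j, y j ∣ L j) :
    f (fun j => Nat.gcd (x j) (y j))
      = ∑ k ∈ Fintype.piFinset (fun j => (L j).divisors),
          dirichletConvD d f (muD d) k
            * ((if ∀ j, k j ∣ x j then (1:ℝ) else 0) * (if ∀ j, k j ∣ y j then (1:ℝ) else 0)) := by
  classical
  have hgpos : ∀ j, 0 < Nat.gcd (x j) (y j) := fun j => Nat.gcd_pos_of_pos_left _ (hx j)
  rw [← inv_lemma f (fun j => Nat.gcd (x j) (y j)) hgpos]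
  set T := Fintype.piFinset (fun j => Nat.gcd (x j) (y j) |>.divisors) with hT
  set K := Fintype.piFinset (fun j => (L j).divisors) with hK
  have step : ∀ k ∈ K, dirichletConvD d f (muD d) k
      * ((if ∀ j, k j ∣ x j then (1:ℝ) else 0) * (if ∀ j, k j ∣ y j then (1:ℝ) else 0))
      = if k ∈ T then dirichletConvD d f (muD d) k else 0 := by
    intro k hk
    have hmem : k ∈ T ↔ (∀ j, k j ∣ x j) ∧ (∀ j, k j ∣ y j) := by
      simp only [hT, Fintype.mem_piFinset, Nat.mem_divisors]
      constructor
      · intro h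
        exact ⟨fun j => (h j).1.trans (Nat.gcd_dvd_left _ _),
          fun j => (h j).1.trans (Nat.gcd_dvd_right _ _)⟩
      · intro h j
        exact ⟨Nat.dvd_gcd (h.1 j) (h.2 j), (hgpos j).ne'⟩
    by_cases hc : (∀ j, k j ∣ x j) ∧ (∀ j, k j ∣ y j)
    · rw [if_pos (hmem.mpr hc), if_pos hc.1, if_pos hc.2]; ring
    · rw [if_neg (fun h => hc (hmem.mp h))]
      rcases not_and_or.mp hc with h | h
      · rw [if_neg h]; ring
      · rw [if_neg h]; ring
  rw [Finset.sum_congr rfl step, Finset.sum_ite_mem]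
  congr 1
  symm
  rw [Finset.inter_eq_right]
  intro k hk
  simp only [hT, Fintype.mem_piFinset, Nat.mem_divisors] at hk ⊢
  simp only [hK, Fintype.mem_piFinset, Nat.mem_divisors]
  exact fun j => ⟨(hk j).1.trans ((Nat.gcd_dvd_left _ _).trans (hxL j)), hL j⟩

lemma sum_quad {ι κ : Type*} [Fintype ι] (K : Finset κ) (g : κ → ℝ) (e : κ → ι → ℝ)
    (v : ι → ℝ) :
    ∑ a, v a * ∑ b, (∑ k ∈ K, g k * (e k a * e k b)) * v b
      = ∑ k ∈ K, g k * (∑ a, v a * e k a) ^ 2 := by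
  have lhs1 : ∀ a : ι, v a * ∑ b, (∑ k ∈ K, g k * (e k a * e k b)) * v b
      = ∑ k ∈ K, ∑ b, g k * ((v a * e k a) * (v b * e k b)) := by
    intro a
    rw [Finset.mul_sum]
    have hb : ∀ b : ι, v a * ((∑ k ∈ K, g k * (e k a * e k b)) * v b)
        = ∑ k ∈ K, g k * ((v a * e k a) * (v b * e k b)) := by
      intro b
      rw [Finset.sum_mul, Finset.mul_sum]
      exact Finset.sum_congr rfl fun k _ => by ring
    rw [Finset.sum_congr rfl fun b _ => hb b]
    exact Finset.sum_comm
  rw [Finset.sum_congr rfl fun a _ => lhs1 a, Finset.sum_comm]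
  refine Finset.sum_congr rfl fun k _ => ?_
  rw [sq, Finset.sum_mul_sum, Finset.mul_sum]
  exact Finset.sum_congr rfl fun a _ => by rw [Finset.mul_sum]

lemma inner_eval {d : ℕ} (i k : Fin d → ℕ) (hi : ∀ j, 0 < i j) (hk : ∀ j, k j ∣ i j) :
    ∑ x ∈ Fintype.piFinset (fun j => (i j).divisors),
        (muD d (fun j => i j / x j) * (if ∀ j, k j ∣ x j then (1:ℝ) else 0))
      = if i = k then 1 else 0 := by
  classical
  have h2 : ∀ x : Fin d → ℕ,
      muD d (fun j => i j / x j) * (if ∀ j, k j ∣ x j then (1:ℝ) else 0)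
        = if ∀ j, k j ∣ x j then ∏ j, muR (i j / x j) else 0 := by
    intro x
    rw [muD]
    split <;> simp
  rw [Finset.sum_congr rfl fun x _ => h2 x,
    sum_pi_ite (fun j => (i j).divisors) (fun j x => k j ∣ x) (fun j x => muR (i j / x))]
  have h3 : ∀ j, (∑ x ∈ (i j).divisors, if k j ∣ x then muR (i j / x) else 0)
      = if i j = k j then 1 else 0 := fun j => key' (i j) (k j) (hi j) (hk j)
  rw [Finset.prod_congr rfl fun j _ => h3 j,
    ← ite_forall_prod (fun j => i j = k j) (fun _ => 1)]
  simp only [Finset.prod_const_one]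
  congr 1
  simp only [eq_iff_iff]
  constructor
  · intro h; funext j; exact h j
  · intro h j; exact congrFun h j

/-- Let `d ≥ 1`.  A function `f : ℤ₊^d → ℝ` is positive definite iff
`(f *_d μ_d)(i₁, …, i_d) ≥ 0` for all positive integers `i₁, …, i_d`. -/
theorem posDefArith_iff_moebius_conv_nonneg (d : ℕ) (hd : 1 ≤ d) (f : (Fin d → ℕ) → ℝ) :
    IsPosDefArith d f ↔
      ∀ i : Fin d → ℕ, (∀ j, 0 < i j) → 0 ≤ dirichletConvD d f (muD d) i := by
  classical
  constructor
  · -- PSD ⇒ nonneg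
    intro hpd i hi
    set S := Fintype.piFinset (fun j => (i j).divisors) with hSdef
    have hiS : i ∈ S := by
      rw [hSdef, Fintype.mem_piFinset]
      exact fun j => Nat.mem_divisors_self _ (hi j).ne'
    have hposS : ∀ x ∈ S, ∀ j, 0 < x j := by
      intro x hx j
      rw [hSdef, Fintype.mem_piFinset] at hx
      exact Nat.pos_of_mem_divisors (hx j)
    have hdvdS : ∀ x ∈ S, ∀ j, x j ∣ i j := by
      intro x hx j
      rw [hSdef, Fintype.mem_piFinset] at hx
      exact (Nat.mem_divisors.mp (hx j)).1
    have hpsd := hpd S ⟨i, hiS⟩ hposS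
    set v : ↥S → ℝ := fun x => muD d (fun j => i j / (x : Fin d → ℕ) j) with hv
    have h0 := hpsd.dotProduct_mulVec_nonneg v
    have hdot : dotProduct (star v)
        ((Matrix.of fun x y : S => f fun j => Nat.gcd (x.1 j) (y.1 j)).mulVec v)
        = ∑ a : ↥S, v a * ∑ b : ↥S,
            (∑ k ∈ S, dirichletConvD d f (muD d) k *
              ((if ∀ j, k j ∣ (a : Fin d → ℕ) j then (1:ℝ) else 0) *
               (if ∀ j, k j ∣ (b : Fin d → ℕ) j then (1:ℝ) else 0))) * v b := by
      simp only [dotProduct, Matrix.mulVec, Matrix.of_apply, Pi.star_apply,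
        star_trivial]
      refine Finset.sum_congr rfl fun a _ => ?_
      congr 1
      refine Finset.sum_congr rfl fun b _ => ?_
      congr 1
      exact gcd_expand f i (fun j => (hi j).ne') a.1 b.1 (hposS a.1 a.2) (hposS b.1 b.2)
        (hdvdS a.1 a.2) (hdvdS b.1 b.2)
    have hquad := sum_quad S (dirichletConvD d f (muD d))
      (fun k (a : ↥S) => if ∀ j, k j ∣ (a : Fin d → ℕ) j then (1:ℝ) else 0) v
    rw [hdot, hquad] at h0
    have hinner : ∀ k ∈ S, (∑ a : ↥S, v a *
        (if ∀ j, k j ∣ (a : Fin d → ℕ) j then (1:ℝ) else 0)) = if i = k then 1 else 0 := by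
      intro k hk
      rw [hSdef, Fintype.mem_piFinset] at hk
      have hcoe : (∑ a : ↥S, v a * (if ∀ j, k j ∣ (a : Fin d → ℕ) j then (1:ℝ) else 0))
          = ∑ x ∈ S, (muD d (fun j => i j / x j) * (if ∀ j, k j ∣ x j then (1:ℝ) else 0)) :=
        Finset.sum_coe_sort S
          (fun x => muD d (fun j => i j / x j) * (if ∀ j, k j ∣ x j then (1:ℝ) else 0))
      rw [hcoe, hSdef]
      exact inner_eval i k hi (fun j => (Nat.mem_divisors.mp (hk j)).1)
    have hfinal : ∑ k ∈ S, dirichletConvD d f (muD d) k *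
        (∑ a : ↥S, v a * (if ∀ j, k j ∣ (a : Fin d → ℕ) j then (1:ℝ) else 0)) ^ 2
        = dirichletConvD d f (muD d) i := by
      rw [Finset.sum_congr rfl fun k hk => by rw [hinner k hk]]
      have : ∀ k : Fin d → ℕ, dirichletConvD d f (muD d) k *
          ((if i = k then (1:ℝ) else 0)) ^ 2
          = if i = k then dirichletConvD d f (muD d) k else 0 := by
        intro k; split <;> simp
      rw [Finset.sum_congr rfl fun k _ => this k, Finset.sum_ite_eq S i
        (dirichletConvD d f (muD d)), if_pos hiS]
    rwa [hfinal] at h0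
  · -- nonneg ⇒ PSD
    intro hg S hS hpos
    refine Matrix.PosSemidef.of_dotProduct_mulVec_nonneg ?_ ?_
    · ext a b
      simp only [Matrix.conjTranspose_apply, Matrix.of_apply, star_trivial]
      congr 1
      funext j
      exact Nat.gcd_comm _ _
    · intro v
      set L : Fin d → ℕ := fun j => ∏ x ∈ S, x j with hL
      have hL0 : ∀ j, L j ≠ 0 := fun j => (Finset.prod_pos fun x hx => hpos x hx j).ne'
      have hdvd : ∀ x ∈ S, ∀ j, x j ∣ L j :=
        fun x hx j => Finset.dvd_prod_of_mem (fun y => y j) hx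
      have hdot : dotProduct (star v)
          ((Matrix.of fun x y : S => f fun j => Nat.gcd (x.1 j) (y.1 j)).mulVec v)
          = ∑ a : ↥S, v a * ∑ b : ↥S,
              (∑ k ∈ Fintype.piFinset (fun j => (L j).divisors),
                dirichletConvD d f (muD d) k *
                ((if ∀ j, k j ∣ (a : Fin d → ℕ) j then (1:ℝ) else 0) *
                 (if ∀ j, k j ∣ (b : Fin d → ℕ) j then (1:ℝ) else 0))) * v b := by
        simp only [dotProduct, Matrix.mulVec, Matrix.of_apply, Pi.star_apply,
          star_trivial]
        refine Finset.sum_congr rfl fun a _ => ?_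
        congr 1
        refine Finset.sum_congr rfl fun b _ => ?_
        congr 1
        exact gcd_expand f L hL0 a.1 b.1 (hpos a.1 a.2) (hpos b.1 b.2)
          (hdvd a.1 a.2) (hdvd b.1 b.2)
      have hquad := sum_quad (Fintype.piFinset (fun j => (L j).divisors))
        (dirichletConvD d f (muD d))
        (fun k (a : ↥S) => if ∀ j, k j ∣ (a : Fin d → ℕ) j then (1:ℝ) else 0) v
      rw [hdot, hquad]
      refine Finset.sum_nonneg fun k hk => ?_
      rw [Fintype.mem_piFinset] at hk
      exact mul_nonneg (hg k fun j => Nat.pos_of_mem_divisors (hk j)) (sq_nonneg _)
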